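/- Let (R_n, X_n) be a hidden Markov walk on E × V with E finite, R = (R_n), increments F_j = X_j − X_{j−1}, and let f(u) = E_ν[F_1 | R_1 = u]. Then for every l ≥ 1 and N ≥ 1, the conditional expectation of the l-th iterated sum satisfies E[ Σ_{1≤j_1<...<j_l≤N} F_{j_1} ⊗ ... ⊗ F_{j_l} | σ(R) ] = Σ_{(u_1,...,u_l) ∈ E^l} (f(u_1) ⊗ ... ⊗ f(u_l)) · L_{u_1,...,u_l;N}(R), where L_{u_1,...,u_l;N}(R) is the iterated occupation time. -/

import Mathlib

open MeasureTheory Finset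

section Law
variable {Ω : Type*} [m0 : MeasurableSpace Ω] {E : Type*} [Fintype E] [DecidableEq E]
  [MeasurableSpace E] [MeasurableSingletonClass E] {d : ℕ}

def Cyl (R : ℕ → Ω → E) (n : ℕ) (p : ℕ → E) : Set Ω := {ω | ∀ i ≤ n, R i ω = p i}

lemma measurableSet_cyl {R : ℕ → Ω → E} (hR : ∀ n, Measurable (R n)) (n : ℕ) (p : ℕ → E) :
    MeasurableSet (Cyl R n p) := by
  have : Cyl R n p = ⋂ i ∈ Set.Iic n, R i ⁻¹' {p i} := by
    ext ω; simp [Cyl, Set.mem_iInter]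
  rw [this]
  exact MeasurableSet.biInter (Set.to_countable _)
    fun i _ => (hR i) (measurableSet_singleton _)

lemma law_on_cyl
    (μ : Measure Ω) [IsProbabilityMeasure μ]
    (R : ℕ → Ω → E) (hRmeas : ∀ n, Measurable (R n))
    (F : ℕ → Ω → EuclideanSpace ℝ (Fin d)) (hFmeas : ∀ n, Measurable (F n))
    (ν : E → Measure (EuclideanSpace ℝ (Fin d))) (hν : ∀ u, IsProbabilityMeasure (ν u))
    (hHMC : ∀ (n : ℕ) (path : ℕ → E) (B : ℕ → Set (EuclideanSpace ℝ (Fin d))),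
      (∀ k, MeasurableSet (B k)) →
      μ {ω | (∀ i ≤ n, R i ω = path i) ∧ ∀ k, 1 ≤ k → k ≤ n → F k ω ∈ B k}
        = (∏ k ∈ Finset.Icc 1 n, ν (path k) (B k)) * μ {ω | ∀ i ≤ n, R i ω = path i})
    (n : ℕ) (p : ℕ → E) :
    Measure.map (fun ω (k : Fin n) => F (k+1) ω) (μ.restrict (Cyl R n p))
      = μ (Cyl R n p) • Measure.pi (fun k : Fin n => ν (p (k+1))) := by
  have hΦ : Measurable (fun ω (k : Fin n) => F ((k:ℕ)+1) ω) :=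
    measurable_pi_lambda _ fun k => hFmeas _
  have hCyl : MeasurableSet (Cyl R n p) := measurableSet_cyl hRmeas n p
  haveI : IsFiniteMeasure (μ.restrict (Cyl R n p)) := inferInstance
  haveI : IsFiniteMeasure ((μ.restrict (Cyl R n p)).map (fun ω (k : Fin n) => F ((k:ℕ)+1) ω)) :=
    Measure.isFiniteMeasure_map _ _
  haveI : IsFiniteMeasure (μ (Cyl R n p) • Measure.pi (fun k : Fin n => ν (p (k+1)))) := by
    constructor
    rw [Measure.smul_apply, smul_eq_mul]
    exact ENNReal.mul_lt_top (measure_lt_top _ _) (measure_lt_top _ _)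
  refine ext_of_generate_finite _ generateFrom_pi.symm isPiSystem_pi (fun s hs => ?_) ?_
  · -- boxes
    obtain ⟨B, hB, rfl⟩ := hs
    replace hB : ∀ i, MeasurableSet (B i) := fun i => hB i (Set.mem_univ i)
    -- extend B to ℕ-indexed family
    classical
    set B' : ℕ → Set (EuclideanSpace ℝ (Fin d)) :=
      fun k => if h : 1 ≤ k ∧ k ≤ n then B ⟨k-1, by omega⟩ else Set.univ with hB'
    have hB'meas : ∀ k, MeasurableSet (B' k) := by
      intro k
      by_cases h : 1 ≤ k ∧ k ≤ n
      · simp only [hB', dif_pos h]; exact hB _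
      · simp only [hB', dif_neg h]; exact MeasurableSet.univ
    have key := hHMC n p B' hB'meas
    have hset : {ω | (∀ i ≤ n, R i ω = p i) ∧ ∀ k, 1 ≤ k → k ≤ n → F k ω ∈ B' k}
        = (fun ω (k : Fin n) => F ((k:ℕ)+1) ω) ⁻¹' (Set.univ.pi B) ∩ Cyl R n p := by
      ext ω
      simp only [Set.mem_setOf_eq, Set.mem_inter_iff, Set.mem_preimage, Set.mem_univ_pi, Cyl]
      constructor
      · rintro ⟨h1, h2⟩
        refine ⟨fun k => ?_, h1⟩
        have hk : 1 ≤ (k:ℕ)+1 ∧ (k:ℕ)+1 ≤ n := ⟨le_add_self, k.2⟩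
        have := h2 ((k:ℕ)+1) hk.1 hk.2
        simp only [hB', dif_pos hk, Nat.add_sub_cancel, Fin.eta] at this
        exact this
      · rintro ⟨h1, h2⟩
        refine ⟨h2, fun k hk1 hkn => ?_⟩
        have hk : 1 ≤ k ∧ k ≤ n := ⟨hk1, hkn⟩
        simp only [hB', dif_pos hk]
        have h1' := h1 ⟨k-1, by omega⟩
        simp only [Fin.eta] at h1'
        rwa [show k - 1 + 1 = k by omega] at h1'
    have hprod : ∏ k ∈ Finset.Icc 1 n, ν (p k) (B' k)
        = ∏ k : Fin n, ν (p ((k:ℕ)+1)) (B k) := by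
      have e1 : Finset.Icc 1 n = Finset.Ico 1 (n+1) := by
        rw [Finset.Ico_add_one_right_eq_Icc]
      have e2 : ∀ k : Fin n, ν (p ((k:ℕ)+1)) (B k) = ν (p ((k:ℕ)+1)) (B' ((k:ℕ)+1)) := by
        intro k
        have hk : 1 ≤ (k:ℕ)+1 ∧ (k:ℕ)+1 ≤ n := ⟨le_add_self, k.2⟩
        simp only [hB', dif_pos hk, Nat.add_sub_cancel, Fin.eta]
      rw [e1, Finset.prod_Ico_eq_prod_range]
      simp only [Nat.add_sub_cancel]
      rw [Finset.prod_congr rfl (fun k _ => e2 k),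
        Fin.prod_univ_eq_prod_range (fun k => ν (p (k+1)) (B' (k+1))) n]
      apply Finset.prod_congr rfl
      intro i _
      rw [Nat.add_comm 1 i]
    rw [Measure.map_apply hΦ (MeasurableSet.univ_pi hB),
      Measure.restrict_apply (hΦ (MeasurableSet.univ_pi hB)), ← hset, key,
      Measure.smul_apply, Measure.pi_pi, hprod, smul_eq_mul, mul_comm]
    rfl
  · rw [Measure.map_apply hΦ MeasurableSet.univ]
    simp only [Set.preimage_univ, Measure.restrict_apply_univ, Measure.smul_apply, smul_eq_mul]
    rw [measure_univ, mul_one]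

lemma measurableSet_cyl_sup (R : ℕ → Ω → E) (n : ℕ) (p : ℕ → E) :
    MeasurableSet[⨆ k : ℕ, MeasurableSpace.comap (R k) inferInstance] (Cyl R n p) := by
  have : Cyl R n p = ⋂ i ∈ Set.Iic n, R i ⁻¹' {p i} := by
    ext ω; simp [Cyl, Set.mem_iInter]
  rw [this]
  refine MeasurableSet.biInter (Set.to_countable _) fun i _ => ?_
  exact le_iSup (fun k : ℕ => MeasurableSpace.comap (R k) inferInstance) i
    _ ⟨{p i}, measurableSet_singleton _, rfl⟩

lemma isPiSystem_cyl (R : ℕ → Ω → E) (N : ℕ) :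
    IsPiSystem {t | ∃ n, N ≤ n ∧ ∃ p : ℕ → E, t = Cyl R n p} := by
  rintro _ ⟨n, hn, p, rfl⟩ _ ⟨m, hm, q, rfl⟩ hne
  rcases le_total n m with h | h
  · obtain ⟨ω, hω1, hω2⟩ := hne
    have hpq : ∀ i ≤ n, p i = q i := fun i hi => by
      rw [← hω1 i hi, hω2 i (hi.trans h)]
    have : Cyl R n p ∩ Cyl R m q = Cyl R m q := by
      apply Set.inter_eq_self_of_subset_right
      intro ω' hω' i hi
      rw [hω' i (hi.trans h), hpq i hi]
    rw [this]; exact ⟨m, hm, q, rfl⟩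
  · obtain ⟨ω, hω1, hω2⟩ := hne
    have hpq : ∀ i ≤ m, q i = p i := fun i hi => by
      rw [← hω2 i hi, hω1 i (hi.trans h)]
    have : Cyl R n p ∩ Cyl R m q = Cyl R n p := by
      apply Set.inter_eq_self_of_subset_left
      intro ω' hω' i hi
      rw [hω' i (hi.trans h), hpq i hi]
    rw [this]; exact ⟨n, hn, p, rfl⟩

lemma generateFrom_cyl (R : ℕ → Ω → E) (N : ℕ) :
    (⨆ k : ℕ, MeasurableSpace.comap (R k) inferInstance)
      = MeasurableSpace.generateFrom {t | ∃ n, N ≤ n ∧ ∃ p : ℕ → E, t = Cyl R n p} := by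
  apply le_antisymm
  · apply iSup_le
    intro k
    rintro _ ⟨S, _, rfl⟩
    -- R k ⁻¹' S is a union of cylinders at level max k N
    set n := max k N with hn
    have hkn : k ≤ n := le_max_left _ _
    have : R k ⁻¹' S = ⋃ p : {p : Fin (n+1) → E // p ⟨k, Nat.lt_succ_of_le hkn⟩ ∈ S},
        Cyl R n (fun i => if h : i ≤ n then (p : Fin (n+1) → E) ⟨i, Nat.lt_succ_of_le h⟩
          else (p : Fin (n+1) → E) ⟨n, n.lt_succ_self⟩) := by
      ext ω
      constructor
      · intro hω
        refine Set.mem_iUnion.2 ⟨⟨fun i => R i ω, hω⟩, ?_⟩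
        intro i hi
        simp [hi]
      · intro hω
        obtain ⟨p, hp⟩ := Set.mem_iUnion.1 hω
        have := hp k hkn
        simp only [hkn, dif_pos] at this
        rw [Set.mem_preimage, this]
        exact p.2
    rw [this]
    exact MeasurableSet.iUnion fun p =>
      MeasurableSpace.measurableSet_generateFrom ⟨n, le_max_right _ _, _, rfl⟩
  · apply MeasurableSpace.generateFrom_le
    rintro _ ⟨n, _, p, rfl⟩
    exact measurableSet_cyl_sup R n p


lemma euclid_integral_apply {α : Type*} [MeasurableSpace α] {μ : Measure α} {ι : Type*} [Fintype ι]
    {ψ : α → EuclideanSpace ℝ ι} (h : Integrable ψ μ) (j : ι) :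
    (∫ a, ψ a ∂μ) j = ∫ a, ψ a j ∂μ :=
  ((PiLp.proj (𝕜 := ℝ) 2 (fun _ : ι => ℝ) j).integral_comp_comm h).symm

lemma euclid_coord_integrable {α : Type*} [MeasurableSpace α] {μ : Measure α} {ι : Type*}
    [Fintype ι] {ψ : α → EuclideanSpace ℝ ι} (h : Integrable ψ μ) (j : ι) :
    Integrable (fun a => ψ a j) μ :=
  (PiLp.proj (𝕜 := ℝ) 2 (fun _ : ι => ℝ) j).integrable_comp h

/-- The core computation: integral of a product of increments over a cylinder. -/
lemma prod_integral_on_cyl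
    (μ : Measure Ω) [IsProbabilityMeasure μ]
    (R : ℕ → Ω → E) (hRmeas : ∀ n, Measurable (R n))
    (F : ℕ → Ω → EuclideanSpace ℝ (Fin d)) (hFmeas : ∀ n, Measurable (F n))
    (ν : E → Measure (EuclideanSpace ℝ (Fin d))) (hν : ∀ u, IsProbabilityMeasure (ν u))
    (hνint : ∀ u, Integrable (fun x => x) (ν u))
    (hHMC : ∀ (n : ℕ) (path : ℕ → E) (B : ℕ → Set (EuclideanSpace ℝ (Fin d))),
      (∀ k, MeasurableSet (B k)) →
      μ {ω | (∀ i ≤ n, R i ω = path i) ∧ ∀ k, 1 ≤ k → k ≤ n → F k ω ∈ B k}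
        = (∏ k ∈ Finset.Icc 1 n, ν (path k) (B k)) * μ {ω | ∀ i ≤ n, R i ω = path i})
    {N n : ℕ} (hn : N ≤ n) (p : ℕ → E) {l : ℕ} (s : Fin l → Fin (N+1))
    (hs1 : ∀ i, 1 ≤ (s i : ℕ)) (hsinj : Function.Injective s) (c : Fin l → Fin d) :
    IntegrableOn (fun ω => ∏ i, F (s i) ω (c i)) (Cyl R n p) μ ∧
    ∫ ω in Cyl R n p, ∏ i, F (s i) ω (c i) ∂μ
      = (μ (Cyl R n p)).toReal * ∏ i, (∫ x, x ∂(ν (p (s i)))) (c i) := by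
  classical
  -- index embedding
  have hsN : ∀ i, (s i : ℕ) ≤ N := fun i => Nat.lt_succ_iff.mp (s i).2
  set e : Fin l → Fin n := fun i => ⟨(s i : ℕ) - 1, by have h1 := hs1 i; have h2 := hsN i; omega⟩ with he
  have heinj : Function.Injective e := by
    intro i j hij
    apply hsinj
    have : (s i : ℕ) - 1 = (s j : ℕ) - 1 := congrArg Fin.val hij
    have h1 := hs1 i; have h2 := hs1 j
    exact Fin.ext (by omega)
  have he1 : ∀ i, ((e i : ℕ)) + 1 = (s i : ℕ) := fun i => by
    have := hs1 i; simp only [he]; omega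
  -- the product as a function on path space
  set h : (k : Fin n) → EuclideanSpace ℝ (Fin d) → ℝ :=
    fun k y => ∏ i ∈ univ.filter (fun i => e i = k), y (c i) with hh
  set G : (Fin n → EuclideanSpace ℝ (Fin d)) → ℝ := fun x => ∏ k, h k (x k) with hG
  have hGmeas : Measurable G := by
    apply Finset.measurable_prod
    intro k _
    apply Finset.measurable_prod
    intro i _
    exact ((measurable_pi_apply (c i)).comp (WithLp.measurable_ofLp 2 _)).comp (measurable_pi_apply k)
  have hsub : ∀ k : Fin n, (univ.filter (fun i => e i = k)) = ∅ ∨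
      ∃ i0, univ.filter (fun i => e i = k) = {i0} := by
    intro k
    rcases (univ.filter (fun i => e i = k)).eq_empty_or_nonempty with hemp | ⟨i0, hi0⟩
    · exact Or.inl hemp
    · exact Or.inr ⟨i0, Finset.eq_singleton_iff_unique_mem.mpr ⟨hi0, fun b hb => heinj (by
        rw [(Finset.mem_filter.mp hb).2, (Finset.mem_filter.mp hi0).2])⟩⟩
  have hfiber : ∀ k : Fin n, Integrable (h k) (ν (p ((k:ℕ)+1))) ∧
      ∫ y, h k y ∂(ν (p ((k:ℕ)+1)))
        = ∏ i ∈ univ.filter (fun i => e i = k), (∫ x, x ∂(ν (p (s i)))) (c i) := by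
    intro k
    haveI := hν (p ((k:ℕ)+1))
    rcases hsub k with hk | ⟨i0, hk⟩
    · have hconst : h k = fun _ => (1:ℝ) := by
        funext y; simp only [hh]; rw [hk, Finset.prod_empty]
      rw [hk]
      constructor
      · rw [hconst]; exact integrable_const 1
      · rw [hconst, Finset.prod_empty]; simp
    · have hone : h k = fun y => y (c i0) := by
        funext y; simp only [hh]; rw [hk, Finset.prod_singleton]
      have hi0mem : e i0 = k := by
        have : i0 ∈ univ.filter (fun i => e i = k) := hk ▸ Finset.mem_singleton_self i0
        exact (Finset.mem_filter.mp this).2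
      have hps : (s i0 : ℕ) = (k:ℕ)+1 := by rw [← he1 i0, hi0mem]
      rw [hk, Finset.prod_singleton, hone]
      constructor
      · exact euclid_coord_integrable (hνint (p ((k:ℕ)+1))) (c i0)
      · rw [← euclid_integral_apply (hνint (p ((k:ℕ)+1))) (c i0), hps]
  have hIG : Integrable G (Measure.pi fun k : Fin n => ν (p ((k:ℕ)+1))) :=
    haveI : ∀ k : Fin n, SigmaFinite (ν (p ((k:ℕ)+1))) := fun k => by
      haveI := hν (p ((k:ℕ)+1)); infer_instance
    Integrable.fintype_prod_dep (f := h) (μ := fun k : Fin n => ν (p ((k:ℕ)+1)))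
      (fun k => (hfiber k).1)
  have hIGint : ∫ x, G x ∂(Measure.pi fun k : Fin n => ν (p ((k:ℕ)+1)))
      = ∏ i, (∫ x, x ∂(ν (p (s i)))) (c i) := by
    have h1 : ∫ x, G x ∂(Measure.pi fun k : Fin n => ν (p ((k:ℕ)+1)))
        = ∏ k : Fin n, ∫ y, h k y ∂(ν (p ((k:ℕ)+1))) :=
      haveI : ∀ k : Fin n, SigmaFinite (ν (p ((k:ℕ)+1))) := fun k => by
        haveI := hν (p ((k:ℕ)+1)); infer_instance
      integral_fintype_prod_eq_prod (E := fun _ : Fin n => EuclideanSpace ℝ (Fin d)) h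
        (μ := fun k : Fin n => ν (p ((k:ℕ)+1)))
    rw [h1, Finset.prod_congr rfl (fun k _ => (hfiber k).2)]
    exact Finset.prod_fiberwise univ e (fun i => (∫ x, x ∂(ν (p (s i)))) (c i))
  have hcomp : ∀ ω, G (fun k : Fin n => F ((k:ℕ)+1) ω) = ∏ i, F (s i) ω (c i) := by
    intro ω
    calc G (fun k : Fin n => F ((k:ℕ)+1) ω)
        = ∏ k : Fin n, ∏ i ∈ univ.filter (fun i => e i = k), F (s i) ω (c i) := by
          refine Finset.prod_congr rfl fun k _ => ?_
          simp only [hh]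
          refine Finset.prod_congr rfl fun i hi => ?_
          have hk : ((k:ℕ))+1 = ((s i : ℕ)) := by
            rw [← (Finset.mem_filter.mp hi).2]; exact he1 i
          rw [hk]
      _ = ∏ i, F (s i) ω (c i) :=
          Finset.prod_fiberwise univ e (fun i => F (s i) ω (c i))
  have hlaw := law_on_cyl μ R hRmeas F hFmeas ν hν hHMC n p
  have hΦ : Measurable (fun ω (k : Fin n) => F ((k:ℕ)+1) ω) :=
    measurable_pi_lambda _ fun k => hFmeas _
  have hint : IntegrableOn (fun ω => ∏ i, F (s i) ω (c i)) (Cyl R n p) μ := by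
    have h2 : Integrable G ((μ.restrict (Cyl R n p)).map (fun ω (k : Fin n) => F ((k:ℕ)+1) ω)) := by
      rw [hlaw]; exact hIG.smul_measure (measure_ne_top μ _)
    have h3 := (integrable_map_measure hGmeas.aestronglyMeasurable hΦ.aemeasurable).mp h2
    have h4 : (G ∘ (fun ω (k : Fin n) => F ((k:ℕ)+1) ω)) = fun ω => ∏ i, F (s i) ω (c i) :=
      funext hcomp
    rwa [h4] at h3
  refine ⟨hint, ?_⟩
  have h4 : ∫ ω in Cyl R n p, ∏ i, F (s i) ω (c i) ∂μ
      = ∫ x, G x ∂((μ.restrict (Cyl R n p)).map (fun ω (k : Fin n) => F ((k:ℕ)+1) ω)) := by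
    rw [integral_map hΦ.aemeasurable hGmeas.aestronglyMeasurable]
    exact (integral_congr_ae (Filter.Eventually.of_forall fun ω => hcomp ω)).symm
  rw [h4, hlaw, integral_smul_measure, hIGint, smul_eq_mul]

lemma pi_integral_apply {α : Type*} [MeasurableSpace α] {μ : Measure α} {ι : Type*} [Fintype ι]
    {ψ : α → ι → ℝ} (h : Integrable ψ μ) (j : ι) :
    (∫ a, ψ a ∂μ) j = ∫ a, ψ a j ∂μ :=
  ((ContinuousLinearMap.proj (R := ℝ) (φ := fun _ : ι => ℝ) j).integral_comp_comm h).symm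

lemma pi_coord_integrable {α : Type*} [MeasurableSpace α] {μ : Measure α} {ι : Type*}
    [Fintype ι] {ψ : α → ι → ℝ} (h : Integrable ψ μ) (j : ι) :
    Integrable (fun a => ψ a j) μ :=
  (ContinuousLinearMap.proj (R := ℝ) (φ := fun _ : ι => ℝ) j).integrable_comp h

lemma pi_integrable_of_coord {α : Type*} [MeasurableSpace α] {μ : Measure α} {ι : Type*}
    [Fintype ι] [DecidableEq ι] {ψ : α → ι → ℝ} (h : ∀ j, Integrable (fun a => ψ a j) μ) :
    Integrable ψ μ := by
  have hψ : ψ = fun a => ∑ j, (ψ a j) • (Pi.single (M := fun _ : ι => ℝ) j (1:ℝ)) := by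
    funext a j'
    rw [Finset.sum_apply]
    simp [Pi.single_apply]
  rw [hψ]
  exact integrable_finset_sum _ fun j _ => (h j).smul_const _

lemma euclid_integrable_of_coord {α : Type*} [MeasurableSpace α] {μ : Measure α} {ι : Type*}
    [Fintype ι] [DecidableEq ι] {ψ : α → EuclideanSpace ℝ ι}
    (h : ∀ j, Integrable (fun a => ψ a j) μ) : Integrable ψ μ := by
  have h2 : Integrable (fun a => WithLp.ofLp (ψ a)) μ := pi_integrable_of_coord h
  exact (PiLp.continuousLinearEquiv 2 ℝ (fun _ : ι => ℝ)).symm.toContinuousLinearMap.integrable_comp h2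

lemma comb {l M : ℕ} {E : Type*} [Fintype E] [DecidableEq E] (S : Finset (Fin l → Fin M))
    (p : ℕ → E) (h : (Fin l → E) → ℝ) :
    ∑ s ∈ S, h (fun i => p (s i)) = ∑ u : Fin l → E,
      ((S.filter (fun s => ∀ i, p (s i) = u i)).card : ℝ) * h u := by
  classical
  rw [← Finset.sum_fiberwise S (fun s => (fun i => p (s i)))
    (fun s => h (fun i => p (s i)))]
  refine Finset.sum_congr rfl fun u _ => ?_
  have hfil : S.filter (fun s => (fun i => p (s i)) = u)
      = S.filter (fun s => ∀ i, p (s i) = u i) := by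
    apply Finset.filter_congr
    intro s _
    simp [funext_iff]
  calc ∑ s ∈ S.filter (fun s => (fun i => p (s i)) = u), h (fun i => p (s i))
      = ∑ s ∈ S.filter (fun s => (fun i => p (s i)) = u), h u := by
        refine Finset.sum_congr rfl fun s hs => ?_
        rw [(Finset.mem_filter.mp hs).2]
    _ = ((S.filter (fun s => ∀ i, p (s i) = u i)).card : ℝ) * h u := by
        rw [hfil, Finset.sum_const, nsmul_eq_mul]

end Law

/-- Iterated occupation time: the number of strictly increasing `l`-tuples of times
`1 ≤ j_1 < ... < j_l ≤ N` with `R_{j_i} = u_i` for all `i`. -/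
def iterOcc {Ω E : Type*} [DecidableEq E] (R : ℕ → Ω → E) {l : ℕ} (u : Fin l → E)
    (N : ℕ) (ω : Ω) : ℕ :=
  (Finset.univ.filter (fun s : Fin l → Fin (N + 1) =>
    (∀ i j : Fin l, i < j → s i < s j) ∧ ∀ i, 1 ≤ (s i : ℕ) ∧ R (s i) ω = u i)).card

/-- Conditionally on `σ(R)`, the expectation of the `l`-th iterated sum of a hidden Markov
walk is the linear combination of iterated occupation times:
`E[Σ_{j_1<...<j_l} F_{j_1}⊗...⊗F_{j_l} | σ(R)] = Σ_u f(u_1)⊗...⊗f(u_l) · L_{u;N}(R)`,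
where `f(u)` is the mean of `ν(·|u)`. -/
theorem condexp_iterated_sum_eq {Ω : Type*} [m0 : MeasurableSpace Ω]
    (μ : Measure Ω) [IsProbabilityMeasure μ]
    {E : Type*} [Fintype E] [DecidableEq E] [MeasurableSpace E] [MeasurableSingletonClass E]
    {d : ℕ}
    (R : ℕ → Ω → E) (hRmeas : ∀ n, Measurable (R n))
    (F : ℕ → Ω → EuclideanSpace ℝ (Fin d)) (hFmeas : ∀ n, Measurable (F n))
    (hFint : ∀ n, Integrable (F n) μ)
    (ν : E → Measure (EuclideanSpace ℝ (Fin d))) (hν : ∀ u, IsProbabilityMeasure (ν u))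
    (hνint : ∀ u, Integrable (fun x => x) (ν u))
    -- conditionally on `σ(R)`, the `F_k` are independent with laws `ν(·|R_k)`:
    (hHMC : ∀ (n : ℕ) (path : ℕ → E) (B : ℕ → Set (EuclideanSpace ℝ (Fin d))),
      (∀ k, MeasurableSet (B k)) →
      μ {ω | (∀ i ≤ n, R i ω = path i) ∧ ∀ k, 1 ≤ k → k ≤ n → F k ω ∈ B k}
        = (∏ k ∈ Finset.Icc 1 n, ν (path k) (B k)) * μ {ω | ∀ i ≤ n, R i ω = path i})
    (l : ℕ) (hl : 1 ≤ l) (N : ℕ) (hN : 1 ≤ N) :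
    μ[fun ω => (WithLp.toLp 2 fun j : Fin l → Fin d =>
        ∑ s ∈ Finset.univ.filter (fun s : Fin l → Fin (N + 1) =>
            (∀ i j' : Fin l, i < j' → s i < s j') ∧ ∀ i, 1 ≤ (s i : ℕ)),
          ∏ i : Fin l, F (s i) ω (j i) : EuclideanSpace ℝ (Fin l → Fin d))
      | ⨆ n : ℕ, MeasurableSpace.comap (R n) inferInstance]
    =ᵐ[μ] fun ω => ∑ u : Fin l → E,
        (iterOcc R u N ω : ℝ) • (WithLp.toLp 2 fun j : Fin l → Fin d =>
          ∏ i : Fin l, (∫ x, x ∂(ν (u i))) (j i) : EuclideanSpace ℝ (Fin l → Fin d)) := by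
  classical
  have hm : (⨆ n : ℕ, MeasurableSpace.comap (R n) inferInstance : MeasurableSpace Ω) ≤ m0 := iSup_le fun n => (hRmeas n).comap_le
  haveI : SigmaFinite (μ.trim hm) := inferInstance
  set S : Finset (Fin l → Fin (N+1)) := Finset.univ.filter (fun s : Fin l → Fin (N + 1) =>
      (∀ i j' : Fin l, i < j' → s i < s j') ∧ ∀ i, 1 ≤ (s i : ℕ)) with hS
  set fbar : E → EuclideanSpace ℝ (Fin d) := fun u => ∫ x, x ∂(ν u) with hfbar
  set f : Ω → EuclideanSpace ℝ (Fin l → Fin d) := fun ω =>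
    (WithLp.toLp 2 fun j : Fin l → Fin d => ∑ s ∈ S, ∏ i : Fin l, F (s i) ω (j i) :
      EuclideanSpace ℝ (Fin l → Fin d)) with hf
  set g : Ω → EuclideanSpace ℝ (Fin l → Fin d) := fun ω => ∑ u : Fin l → E,
    (iterOcc R u N ω : ℝ) • (WithLp.toLp 2 fun j : Fin l → Fin d =>
      ∏ i : Fin l, fbar (u i) (j i) : EuclideanSpace ℝ (Fin l → Fin d)) with hg
  have hS1 : ∀ s ∈ S, ∀ i, 1 ≤ (s i : ℕ) := fun s hs i => (Finset.mem_filter.mp hs).2.2 i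
  have hSinj : ∀ s ∈ S, Function.Injective s := by
    intro s hs
    have hmono : StrictMono s := fun a b h => (Finset.mem_filter.mp hs).2.1 a b h
    exact hmono.injective
  -- covering of Ω by level-N cylinders
  set ext : (Fin (N+1) → E) → ℕ → E :=
    fun q i => if h : i ≤ N then q ⟨i, Nat.lt_succ_of_le h⟩ else q 0 with hext
  have hcover : (⋃ q : Fin (N+1) → E, Cyl R N (ext q)) = Set.univ := by
    apply Set.eq_univ_of_forall
    intro ω
    refine Set.mem_iUnion.2 ⟨fun i => R i ω, fun i hi => ?_⟩
    simp only [hext, hi, dif_pos]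
  -- integrability of coordinate products
  have hprodInt : ∀ s ∈ S, ∀ c : Fin l → Fin d,
      Integrable (fun ω => ∏ i, F (s i) ω (c i)) μ := by
    intro s hs c
    rw [← integrableOn_univ, ← hcover, integrableOn_finite_iUnion]
    intro q
    exact (prod_integral_on_cyl μ R hRmeas F hFmeas ν hν hνint hHMC le_rfl (ext q) s
      (hS1 s hs) (hSinj s hs) c).1
  have hf_int : Integrable f μ := by
    apply euclid_integrable_of_coord
    intro j
    exact integrable_finset_sum _ fun s hs => hprodInt s hs j
  -- m-measurability of the occupation times
  have hiter_meas : ∀ u : Fin l → E, Measurable[(⨆ n : ℕ, MeasurableSpace.comap (R n) inferInstance : MeasurableSpace Ω)] (fun ω => (iterOcc R u N ω : ℝ)) := by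
    intro u
    have hrw : (fun ω => (iterOcc R u N ω : ℝ)) = fun ω => ∑ s : Fin l → Fin (N+1),
        if (∀ i j' : Fin l, i < j' → s i < s j') ∧ ∀ i, 1 ≤ (s i:ℕ) ∧ R (s i) ω = u i
        then (1:ℝ) else 0 := by
      funext ω
      rw [iterOcc, Finset.card_filter]
      push_cast
      rfl
    rw [hrw]
    apply Finset.measurable_sum
    intro s _
    refine Measurable.ite ?_ measurable_const measurable_const
    by_cases hc : (∀ i j' : Fin l, i < j' → s i < s j') ∧ ∀ i, 1 ≤ (s i:ℕ)
    · have hset : {ω | (∀ i j' : Fin l, i < j' → s i < s j') ∧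
          ∀ i, 1 ≤ (s i:ℕ) ∧ R (s i) ω = u i} = ⋂ i, R (s i) ⁻¹' {u i} := by
        ext ω
        simp only [Set.mem_setOf_eq, Set.mem_iInter, Set.mem_preimage, Set.mem_singleton_iff]
        exact ⟨fun h i => (h.2 i).2, fun h => ⟨hc.1, fun i => ⟨hc.2 i, h i⟩⟩⟩
      rw [hset]
      exact MeasurableSet.iInter fun i =>
        le_iSup (fun k : ℕ => MeasurableSpace.comap (R k) inferInstance) ((s i : ℕ))
          _ ⟨{u i}, measurableSet_singleton _, rfl⟩
    · have hset : {ω | (∀ i j' : Fin l, i < j' → s i < s j') ∧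
          ∀ i, 1 ≤ (s i:ℕ) ∧ R (s i) ω = u i} = ∅ := by
        ext ω
        simp only [Set.mem_setOf_eq, Set.mem_empty_iff_false, iff_false]
        exact fun h => hc ⟨h.1, fun i => (h.2 i).1⟩
      rw [hset]
      exact @MeasurableSet.empty Ω (⨆ n : ℕ, MeasurableSpace.comap (R n) inferInstance)
  have hg_sm : StronglyMeasurable[(⨆ n : ℕ, MeasurableSpace.comap (R n) inferInstance : MeasurableSpace Ω)] g := by
    apply Finset.stronglyMeasurable_fun_sum
    intro u _
    exact ((hiter_meas u).stronglyMeasurable).smul_const _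
  have hiter_int : ∀ u : Fin l → E, Integrable (fun ω => (iterOcc R u N ω : ℝ)) μ := by
    intro u
    refine Integrable.mono' (integrable_const ((Fintype.card (Fin l → Fin (N+1)) : ℝ)))
      (((hiter_meas u).mono hm le_rfl).aestronglyMeasurable) ?_
    filter_upwards with ω
    rw [Real.norm_eq_abs, abs_of_nonneg (by positivity)]
    exact_mod_cast le_trans (Finset.card_filter_le _ _) (le_of_eq Finset.card_univ)
  have hg_int : Integrable g μ := by
    apply euclid_integrable_of_coord
    intro j
    have hcoord : (fun ω => g ω j) = fun ω => ∑ u : Fin l → E,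
        (iterOcc R u N ω : ℝ) * ∏ i : Fin l, fbar (u i) (j i) := by
      funext ω
      simp only [hg]
      rw [WithLp.ofLp_sum, Finset.sum_apply]
      rfl
    rw [hcoord]
    exact integrable_finset_sum _ fun u _ => (hiter_int u).mul_const _
  -- base case: integral equality on cylinders of level ≥ N
  have base : ∀ n, N ≤ n → ∀ p : ℕ → E,
      ∫ ω in Cyl R n p, g ω ∂μ = ∫ ω in Cyl R n p, f ω ∂μ := by
    intro n hn p
    set L : (Fin l → E) → ℕ := fun u => (S.filter (fun s => ∀ i, p (s i) = u i)).card with hL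
    set w : EuclideanSpace ℝ (Fin l → Fin d) := ∑ u : Fin l → E,
      (L u : ℝ) • (WithLp.toLp 2 fun j : Fin l → Fin d => ∏ i : Fin l, fbar (u i) (j i) :
        EuclideanSpace ℝ (Fin l → Fin d)) with hw
    have hCyl := measurableSet_cyl hRmeas n p
    have hg_on : ∀ ω ∈ Cyl R n p, g ω = w := by
      intro ω hω
      simp only [hg]
      rw [hw]
      refine Finset.sum_congr rfl fun u _ => ?_
      congr 2
      simp only [iterOcc, hL, hS, Finset.filter_filter]
      apply Finset.card_bij (fun s _ => s) ?_ (fun _ _ _ _ h => h) (fun s hs => ⟨s, ?_, rfl⟩)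
      · intro s hs
        have hs' := Finset.mem_filter.mp hs
        refine Finset.mem_filter.mpr ⟨Finset.mem_univ _, ⟨hs'.2.1, fun i => (hs'.2.2 i).1⟩,
          fun i => ?_⟩
        rw [← hω (s i) (le_trans (Nat.lt_succ_iff.mp (s i).2) hn)]
        exact (hs'.2.2 i).2
      · rename_i s hs
        have hs' := Finset.mem_filter.mp hs
        refine Finset.mem_filter.mpr ⟨Finset.mem_univ _, hs'.2.1.1, fun i =>
          ⟨hs'.2.1.2 i, ?_⟩⟩
        rw [hω (s i) (le_trans (Nat.lt_succ_iff.mp (s i).2) hn)]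
        exact hs'.2.2 i
    have hgint_C : ∫ ω in Cyl R n p, g ω ∂μ = (μ (Cyl R n p)).toReal • w := by
      rw [setIntegral_congr_fun hCyl (fun ω hω => hg_on ω hω)]
      exact setIntegral_const w
    have hf_C : ∫ ω in Cyl R n p, f ω ∂μ = (μ (Cyl R n p)).toReal • w := by
      ext j
      rw [euclid_integral_apply hf_int.integrableOn j]
      have e0 : (fun ω => f ω j) = fun ω => ∑ s ∈ S, ∏ i, F (s i) ω (j i) := rfl
      rw [e0, integral_finset_sum S (fun s hs =>
        (prod_integral_on_cyl μ R hRmeas F hFmeas ν hν hνint hHMC hn p s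
          (hS1 s hs) (hSinj s hs) j).1),
        Finset.sum_congr rfl (fun s hs =>
          (prod_integral_on_cyl μ R hRmeas F hFmeas ν hν hνint hHMC hn p s
            (hS1 s hs) (hSinj s hs) j).2),
        ← Finset.mul_sum]
      have hcomb := comb S p (fun v => ∏ i, fbar (v i) (j i))
      rw [hcomb]
      have hrhs : ((μ (Cyl R n p)).toReal • w) j
          = (μ (Cyl R n p)).toReal * ∑ u : Fin l → E, (L u : ℝ) * ∏ i, fbar (u i) (j i) := by
        show (μ (Cyl R n p)).toReal * (w j) = _
        congr 1
        rw [hw, WithLp.ofLp_sum, Finset.sum_apply]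
        exact Finset.sum_congr rfl fun u _ => rfl
      rw [hrhs]
    rw [hgint_C, hf_C]
  -- pairwise disjointness of level-N cylinders
  have hdisjN : Pairwise (Function.onFun Disjoint (fun q : Fin (N+1) → E => Cyl R N (ext q))) := by
    intro q q' hqq'
    refine Set.disjoint_left.mpr fun ω h1 h2 => hqq' (funext fun i => ?_)
    have e1 := h1 i (Nat.lt_succ_iff.mp i.2)
    have e2 := h2 i (Nat.lt_succ_iff.mp i.2)
    rw [e2] at e1
    simp only [hext, Nat.lt_succ_iff.mp i.2, dif_pos, Fin.eta] at e1
    exact e1.symm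
  -- total integral equality
  have htotal : ∫ ω, g ω ∂μ = ∫ ω, f ω ∂μ := by
    rw [← setIntegral_univ, ← setIntegral_univ (f := f), ← hcover]
    have hunion : (⋃ q : Fin (N+1) → E, Cyl R N (ext q))
        = ⋃ q ∈ (Finset.univ : Finset (Fin (N+1) → E)), Cyl R N (ext q) := by simp
    rw [hunion,
      integral_biUnion_finset Finset.univ (fun q _ => measurableSet_cyl hRmeas N (ext q))
        (fun q _ q' _ h => hdisjN h) (fun q _ => hg_int.integrableOn),
      integral_biUnion_finset Finset.univ (fun q _ => measurableSet_cyl hRmeas N (ext q))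
        (fun q _ q' _ h => hdisjN h) (fun q _ => hf_int.integrableOn)]
    exact Finset.sum_congr rfl fun q _ => base N le_rfl (ext q)
  -- all m-measurable sets
  have hsets : ∀ t, MeasurableSet[(⨆ n : ℕ, MeasurableSpace.comap (R n) inferInstance : MeasurableSpace Ω)] t → ∫ ω in t, g ω ∂μ = ∫ ω in t, f ω ∂μ := by
    have hgen : (⨆ n : ℕ, MeasurableSpace.comap (R n) inferInstance : MeasurableSpace Ω) = MeasurableSpace.generateFrom
        {t | ∃ n, N ≤ n ∧ ∃ p : ℕ → E, t = Cyl R n p} := generateFrom_cyl R N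
    intro t ht
    refine MeasurableSpace.induction_on_inter
      (C := fun t _ => ∫ ω in t, g ω ∂μ = ∫ ω in t, f ω ∂μ) hgen (isPiSystem_cyl R N)
      (by simp) ?_ ?_ ?_ t ht
    · rintro t ⟨n, hn, p, rfl⟩
      exact base n hn p
    · intro t htm heq
      have h1 := integral_add_compl (hm t htm) hg_int
      have h2 := integral_add_compl (hm t htm) hf_int
      have e1 : ∫ ω in tᶜ, g ω ∂μ = (∫ ω, g ω ∂μ) - ∫ ω in t, g ω ∂μ := by
        rw [← h1]; abel
      have e2 : ∫ ω in tᶜ, f ω ∂μ = (∫ ω, f ω ∂μ) - ∫ ω in t, f ω ∂μ := by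
        rw [← h2]; abel
      rw [e1, e2, heq, htotal]
    · intro t hdisj htm heq
      rw [integral_iUnion (fun i => hm _ (htm i)) hdisj hg_int.integrableOn,
        integral_iUnion (fun i => hm _ (htm i)) hdisj hf_int.integrableOn]
      exact tsum_congr fun i => heq i
  exact (ae_eq_condExp_of_forall_setIntegral_eq hm hf_int
    (fun s _ _ => hg_int.integrableOn) (fun s hs _ => hsets s hs)
    (⟨g, hg_sm, Filter.EventuallyEq.rfl⟩)).symm
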